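/- For real numbers μ̲ ≤ μ̄ and φ : ℝ → ℝ continuously differentiable, if v(x,t) := sup_{y ∈ [μ̲, μ̄]} φ(x + t y) is differentiable at a point (x,t) with t > 0, then ∂_t v(x,t) = p(∂_x v(x,t)), where p(a) = sup_{y ∈ [μ̲, μ̄]} (y a) = max(a μ̄, a μ̲). (That is, v is a classical solution of the Hamilton–Jacobi equation ∂_t v − p(∂_x v) = 0 wherever it is differentiable.) -/

import Mathlib

set_option maxHeartbeats 1000000


open Set Filter Topology

theorem lln_v_solves_HJ
    (μl μu : ℝ) (hμ : μl ≤ μu)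
    (φ : ℝ → ℝ) (hb : ∃ B, ∀ x, |φ x| ≤ B) (hC1 : ContDiff ℝ 1 φ)
    (v : ℝ → ℝ → ℝ)
    (hv : ∀ x t, v x t = sSup ((fun y => φ (x + t * y)) '' Icc μl μu))
    (x t : ℝ) (ht : 0 < t)
    (D : ℝ × ℝ →L[ℝ] ℝ)
    (hD : HasFDerivAt (fun p : ℝ × ℝ => v p.1 p.2) D (x, t)) :
    D (0, 1) = max (D (1, 0) * μu) (D (1, 0) * μl) := by
  obtain ⟨B, hB⟩ := hb
  have hbdd : ∀ x' t' : ℝ, BddAbove ((fun y => φ (x' + t' * y)) '' Icc μl μu) := by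
    intro x' t'
    refine ⟨B, ?_⟩
    rintro w ⟨y, -, rfl⟩
    exact (abs_le.1 (hB _)).2
  have hcont : ContinuousOn (fun y => φ (x + t * y)) (Icc μl μu) :=
    (hC1.continuous.comp (by continuity)).continuousOn
  obtain ⟨ys, hys, hmax⟩ := isCompact_Icc.exists_isMaxOn (nonempty_Icc.2 hμ) hcont
  set z := x + t * ys with hz
  have hvxt : v x t = φ z := by
    rw [hv]
    exact IsGreatest.csSup_eq ⟨⟨ys, hys, rfl⟩, by rintro w ⟨y, hy, rfl⟩; exact hmax hy⟩
  have hge : ∀ x' t' : ℝ, φ (x' + t' * ys) ≤ v x' t' := by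
    intro x' t'
    rw [hv]
    exact le_csSup (hbdd x' t') ⟨ys, hys, rfl⟩
  have hdiff : Differentiable ℝ φ := hC1.differentiable one_ne_zero
  set a := deriv φ z with ha
  -- derivative of ψ p = φ (p.1 + ys * p.2)
  have hg : HasFDerivAt (fun p : ℝ × ℝ => p.1 + ys * p.2)
      (ContinuousLinearMap.fst ℝ ℝ ℝ + ys • ContinuousLinearMap.snd ℝ ℝ ℝ) (x, t) :=
    hasFDerivAt_fst.add (hasFDerivAt_snd.const_mul ys)
  have hφz : HasFDerivAt φ (fderiv ℝ φ z) (x + ys * t) := by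
    rw [show x + ys * t = z by rw [hz]; ring]
    exact (hdiff z).hasFDerivAt
  have hψ : HasFDerivAt (fun p : ℝ × ℝ => φ (p.1 + ys * p.2))
      ((fderiv ℝ φ z).comp
        (ContinuousLinearMap.fst ℝ ℝ ℝ + ys • ContinuousLinearMap.snd ℝ ℝ ℝ)) (x, t) :=
    hφz.comp (x, t) hg
  have hmin : IsLocalMin (fun p : ℝ × ℝ => v p.1 p.2 - φ (p.1 + ys * p.2)) (x, t) := by
    apply Filter.Eventually.of_forall
    intro p
    have h1 : v x t - φ (x + ys * t) = 0 := by
      rw [hvxt, show x + ys * t = z by rw [hz]; ring, sub_self]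
    have h2 : φ (p.1 + ys * p.2) ≤ v p.1 p.2 := by
      have := hge p.1 p.2
      rwa [show p.1 + p.2 * ys = p.1 + ys * p.2 by ring] at this
    simp only [h1]
    linarith
  have hDeq : D = (fderiv ℝ φ z).comp
      (ContinuousLinearMap.fst ℝ ℝ ℝ + ys • ContinuousLinearMap.snd ℝ ℝ ℝ) := by
    have := hmin.hasFDerivAt_eq_zero (hD.sub hψ)
    have h0 : D - (fderiv ℝ φ z).comp
        (ContinuousLinearMap.fst ℝ ℝ ℝ + ys • ContinuousLinearMap.snd ℝ ℝ ℝ) = 0 := this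
    rwa [sub_eq_zero] at h0
  have hfd : ∀ w : ℝ, fderiv ℝ φ z w = w * a := by
    intro w
    rw [show (w : ℝ) = w • (1 : ℝ) by simp, map_smul, smul_eq_mul, ha, fderiv_apply_one_eq_deriv]
    simp
  have hD10 : D (1, 0) = a := by
    rw [hDeq]
    simp only [ContinuousLinearMap.coe_comp', Function.comp_apply,
      ContinuousLinearMap.add_apply, ContinuousLinearMap.coe_fst',
      ContinuousLinearMap.coe_smul', Pi.smul_apply, ContinuousLinearMap.coe_snd',
      smul_eq_mul]
    rw [hfd]
    ring
  have hD01 : D (0, 1) = ys * a := by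
    rw [hDeq]
    simp only [ContinuousLinearMap.coe_comp', Function.comp_apply,
      ContinuousLinearMap.add_apply, ContinuousLinearMap.coe_fst',
      ContinuousLinearMap.coe_smul', Pi.smul_apply, ContinuousLinearMap.coe_snd',
      smul_eq_mul]
    rw [hfd]
    ring
  -- one-sided inequality: for each y in [μl, μu], y * a ≤ D (0,1)
  have key : ∀ y ∈ Icc μl μu, y * a ≤ D (0, 1) := by
    intro y hy
    -- h s = v x (t+s) - φ (z + s*y) is ≥ 0 for s ≥ 0 and = 0 at 0
    have hpos : ∀ s : ℝ, 0 ≤ s → 0 ≤ v x (t + s) - φ (z + s * y) := by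
      intro s hs
      have hts : 0 < t + s := by linarith
      set c := (t * ys + s * y) / (t + s) with hc
      have hc1 : μl ≤ c := by
        rw [hc, le_div_iff₀ hts]
        nlinarith [hys.1, hys.2, hy.1, hy.2]
      have hc2 : c ≤ μu := by
        rw [hc, div_le_iff₀ hts]
        nlinarith [hys.1, hys.2, hy.1, hy.2]
      have heq : x + (t + s) * c = z + s * y := by
        rw [hz, hc]
        field_simp
        ring
      have hle : φ (z + s * y) ≤ v x (t + s) := by
        rw [hv]
        exact le_csSup (hbdd _ _) ⟨c, ⟨hc1, hc2⟩, by show φ (x + (t + s) * c) = φ (z + s * y); rw [heq]⟩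
      linarith
    have h00 : v x (t + 0) - φ (z + 0 * y) = 0 := by
      rw [add_zero, zero_mul, add_zero, hvxt, sub_self]
    -- derivative of h at 0
    have hc0 : HasDerivAt (fun s : ℝ => ((x : ℝ), t + s)) (((0 : ℝ), (1 : ℝ))) 0 :=
      (hasDerivAt_const (0 : ℝ) x).prodMk ((hasDerivAt_id 0).const_add t)
    have hD' : HasFDerivAt (fun p : ℝ × ℝ => v p.1 p.2) D ((x : ℝ), t + 0) := by
      simpa using hD
    have h1 : HasDerivAt (fun s : ℝ => v x (t + s)) (D (0, 1)) 0 :=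
      hD'.comp_hasDerivAt (f := fun s : ℝ => ((x : ℝ), t + s)) 0 hc0
    have hin : HasDerivAt (fun s : ℝ => z + s * y) (1 * y) 0 :=
      ((hasDerivAt_id 0).mul_const y).const_add z
    have hφz0 : HasDerivAt φ a (z + 0 * y) := by
      rw [show z + 0 * y = z by ring]
      exact (hdiff z).hasDerivAt
    have h2 : HasDerivAt (fun s : ℝ => φ (z + s * y)) (a * (1 * y)) 0 :=
      HasDerivAt.comp 0 hφz0 hin
    have hder : HasDerivAt (fun s : ℝ => v x (t + s) - φ (z + s * y))
        (D (0, 1) - a * (1 * y)) 0 := h1.sub h2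
    -- slope argument from the right
    have htend := hasDerivAt_iff_tendsto_slope.1 hder
    have htend' : Tendsto (slope (fun s : ℝ => v x (t + s) - φ (z + s * y)) 0)
        (𝓝[>] 0) (𝓝 (D (0, 1) - a * (1 * y))) :=
      htend.mono_left (nhdsWithin_mono 0 (fun s hs => ne_of_gt hs))
    have hnn : 0 ≤ D (0, 1) - a * (1 * y) := by
      refine ge_of_tendsto htend' ?_
      filter_upwards [self_mem_nhdsWithin] with s hs
      have hs0 : 0 < s := hs
      rw [slope_def_field]
      rw [h00, sub_zero, sub_zero]
      exact div_nonneg (hpos s hs0.le) hs0.le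
    nlinarith [hnn]
  have hub : D (0, 1) ≤ max (D (1, 0) * μu) (D (1, 0) * μl) := by
    rw [hD01, hD10]
    rcases le_or_gt 0 a with hA | hA
    · have : ys * a ≤ μu * a := mul_le_mul_of_nonneg_right hys.2 hA
      calc ys * a ≤ μu * a := this
        _ = a * μu := by ring
        _ ≤ _ := le_max_left _ _
    · have : ys * a ≤ μl * a := by nlinarith [hys.1]
      calc ys * a ≤ μl * a := this
        _ = a * μl := by ring
        _ ≤ _ := le_max_right _ _
  have hlb : max (D (1, 0) * μu) (D (1, 0) * μl) ≤ D (0, 1) := by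
    rw [hD10]
    refine max_le ?_ ?_
    · have := key μu ⟨hμ, le_rfl⟩; linarith [this]
    · have := key μl ⟨le_rfl, hμ⟩; linarith [this]
  exact le_antisymm hub hlb
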